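/- Let j₀ ≥ 3 be an integer and a > 2, and let v(n) = a if n = j₀ and v(n) = 0 otherwise. For real λ > 2 set μ₊(λ) = (λ + √(λ²−4))/2 and q(x) = x^{2j₀+1} − a x^{2j₀} − x^{2j₀−1} + a. Then λ > 2 is an eigenvalue of H (i.e. Hu = λu for some nonzero u ∈ ℓ²(ℤ⁺)) if and only if q(μ₊(λ)) = 0. -/

import Mathlib

noncomputable section

/-- ℓ²(ℤ⁺), modelled with 0-based indexing: coordinate `n : ℕ` is site `n+1`. -/
abbrev H2 : Type := lp (fun _ : ℕ => ℂ) 2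

/-- The standard orthonormal basis vector δ_{n+1}. -/
noncomputable def e (n : ℕ) : H2 := lp.single 2 n 1

set_option maxHeartbeats 1000000

open scoped ENNReal

lemma coord_eq_inner (w : H2) (j : ℕ) : (inner ℂ (e j) w : ℂ) = w j := by
  simp [e, lp.inner_single_left]

lemma H_apply (v : ℕ → ℝ) (H : H2 →L[ℂ] H2)
    (hH : ∀ j l : ℕ, (inner ℂ (e j) (H (e l)) : ℂ) =
      if j = l then (v j : ℂ) else if j = l + 1 ∨ l = j + 1 then 1 else 0)
    (u : H2) (j : ℕ) :
    (H u) j = u (j+1) + (if j = 0 then 0 else u (j-1)) + (v j : ℂ) * u j := by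
  have hs : HasSum (fun n => lp.single 2 n (u n : ℂ)) u :=
    lp.hasSum_single (by norm_num) u
  have hs2 : HasSum (fun n => H (lp.single 2 n (u n : ℂ))) (H u) := hs.mapL H
  have hs3 : HasSum (fun n => (inner ℂ (e j) (H (lp.single 2 n (u n : ℂ))) : ℂ))
      ((inner ℂ (e j) (H u) : ℂ)) := hs2.mapL (innerSL ℂ (e j))
  have hterm : ∀ n, (inner ℂ (e j) (H (lp.single 2 n (u n : ℂ))) : ℂ)
      = u n * (if j = n then (v j : ℂ) else if j = n + 1 ∨ n = j + 1 then 1 else 0) := by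
    intro n
    have h1 : lp.single 2 n (u n : ℂ) = (u n : ℂ) • e n := by
      rw [e, ← lp.single_smul]; norm_num
    rw [h1, map_smul, inner_smul_right, hH j n]
  rw [← coord_eq_inner]
  simp only [hterm] at hs3
  set g : ℕ → ℂ := fun n => u n * (if j = n then (v j : ℂ) else if j = n + 1 ∨ n = j + 1 then 1 else 0) with hg
  have hfin : HasSum g (∑ n ∈ ({j-1, j, j+1} : Finset ℕ), g n) := by
    apply hasSum_sum_of_ne_finset_zero
    intro b hb
    simp only [Finset.mem_insert, Finset.mem_singleton] at hb
    push_neg at hb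
    have : ¬ (j = b) := by omega
    have h2 : ¬ (j = b + 1 ∨ b = j + 1) := by omega
    simp [hg, this, h2]
  rw [hs3.unique hfin]
  rcases Nat.eq_zero_or_pos j with rfl | hj
  · norm_num [hg]
    ring
  · obtain ⟨i, rfl⟩ : ∃ i, j = i + 1 := ⟨j - 1, by omega⟩
    rw [show ({i+1-1, i+1, i+1+1} : Finset ℕ) = {i, i+1, i+2} from by norm_num]
    rw [Finset.sum_insert (by simp only [Finset.mem_insert, Finset.mem_singleton]; omega),
      Finset.sum_insert (by simp only [Finset.mem_singleton]; omega), Finset.sum_singleton]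
    simp only [hg, Nat.add_sub_cancel]
    norm_num
    ring

lemma eig_iff (v : ℕ → ℝ) (H : H2 →L[ℂ] H2)
    (hH : ∀ j l : ℕ, (inner ℂ (e j) (H (e l)) : ℂ) =
      if j = l then (v j : ℂ) else if j = l + 1 ∨ l = j + 1 then 1 else 0)
    (lam : ℝ) (u : H2) :
    H u = (lam : ℂ) • u ↔
      ∀ j, u (j+1) + (if j = 0 then 0 else u (j-1)) + (v j : ℂ) * u j = (lam : ℂ) * u j := by
  constructor
  · intro h j
    rw [← H_apply v H hH u j, h, lp.coeFn_smul, Pi.smul_apply, smul_eq_mul]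
  · intro h
    apply lp.ext
    funext j
    rw [H_apply v H hH u j, lp.coeFn_smul, Pi.smul_apply, smul_eq_mul]
    exact h j

/-- for the rank-one potential `v(j₀) = a > 2` (at a site `j₀ ≥ 3`), a real
`λ > 2` is an eigenvalue of `H` iff `q(μ₊(λ)) = 0`, where `μ₊(λ) = (λ + √(λ²−4))/2` and
`q(x) = x^{2j₀+1} − a x^{2j₀} − x^{2j₀−1} + a`. -/
theorem stmt_14 (j₀ : ℕ) (hj₀ : 3 ≤ j₀) (a : ℝ) (ha : 2 < a)
    (v : ℕ → ℝ) (hv : ∀ n : ℕ, v n = if n + 1 = j₀ then a else 0)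
    (H : H2 →L[ℂ] H2)
    (hH : ∀ j l : ℕ, (inner ℂ (e j) (H (e l)) : ℂ) =
      if j = l then (v j : ℂ) else if j = l + 1 ∨ l = j + 1 then 1 else 0)
    (lam : ℝ) (hlam : 2 < lam) :
    (∃ u : H2, u ≠ 0 ∧ H u = (lam : ℂ) • u) ↔
      ((lam + Real.sqrt (lam ^ 2 - 4)) / 2) ^ (2 * j₀ + 1) -
          a * ((lam + Real.sqrt (lam ^ 2 - 4)) / 2) ^ (2 * j₀) -
          ((lam + Real.sqrt (lam ^ 2 - 4)) / 2) ^ (2 * j₀ - 1) + a = 0 := by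
  obtain ⟨k₀, rfl⟩ : ∃ k, j₀ = k + 3 := ⟨j₀ - 3, by omega⟩
  have hs0 : (0:ℝ) ≤ lam ^ 2 - 4 := by nlinarith
  have hsq : Real.sqrt (lam ^ 2 - 4) ^ 2 = lam ^ 2 - 4 := Real.sq_sqrt hs0
  have hsnn : 0 ≤ Real.sqrt (lam ^ 2 - 4) := Real.sqrt_nonneg _
  set μ : ℝ := (lam + Real.sqrt (lam ^ 2 - 4)) / 2 with hμdef
  have hμ1 : 1 < μ := by rw [hμdef]; nlinarith
  have hμ0 : (0:ℝ) < μ := by linarith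
  have hμquad : μ ^ 2 + 1 = lam * μ := by rw [hμdef]; linear_combination hsq / 4
  set m : ℂ := (μ : ℂ) with hmdef
  have hm0 : m ≠ 0 := by
    rw [hmdef]; exact_mod_cast ne_of_gt hμ0
  have hmquad : m ^ 2 + 1 = (lam : ℂ) * m := by
    rw [hmdef]; exact_mod_cast congrArg (fun x : ℝ => (x : ℂ)) hμquad
  have hlamc : (lam : ℂ) = m + m⁻¹ := by
    field_simp
    linear_combination -hmquad
  have hmm : m * m⁻¹ = 1 := mul_inv_cancel₀ hm0
  -- exponent bookkeeping
  have hE1 : 2 * (k₀ + 3) + 1 = 2 * k₀ + 7 := by omega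
  have hE2 : 2 * (k₀ + 3) = 2 * k₀ + 6 := by omega
  have hE3 : 2 * (k₀ + 3) - 1 = 2 * k₀ + 5 := by omega
  rw [hE1, hE3, hE2]
  have hqiff : (μ ^ (2*k₀+7) - a * μ ^ (2*k₀+6) - μ ^ (2*k₀+5) + a = 0) ↔
      (m ^ (2*k₀+7) - (a:ℂ) * m ^ (2*k₀+6) - m ^ (2*k₀+5) + (a:ℂ) = 0) := by
    rw [hmdef]
    constructor
    · intro h; exact_mod_cast congrArg (fun x : ℝ => (x : ℂ)) h
    · intro h; exact_mod_cast h
  rw [hqiff]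
  have hvC : ∀ j : ℕ, (v j : ℂ) = if j + 1 = k₀ + 3 then (a:ℂ) else 0 := by
    intro j; rw [hv j]; split_ifs <;> simp
  -- the step identity for powers
  have hpow : ∀ n : ℕ, m ^ n * (m⁻¹) ^ n = 1 := by
    intro n; rw [← mul_pow, hmm, one_pow]
  constructor
  · rintro ⟨u, hu0, hueq⟩
    have hrec := (eig_iff v H hH lam u).1 hueq
    have r0 : (u : ℕ → ℂ) 1 = (lam : ℂ) * u 0 := by
      have h := hrec 0
      rw [if_pos rfl, hvC 0, if_neg (by omega)] at h
      simpa using h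
    have rstep : ∀ t : ℕ, t + 2 ≠ k₀ + 3 → (u : ℕ → ℂ) (t+2) = (lam:ℂ) * u (t+1) - u t := by
      intro t ht
      have h := hrec (t+1)
      rw [if_neg (by omega), hvC (t+1), if_neg (by omega)] at h
      simp only [Nat.add_sub_cancel] at h
      linear_combination h
    have rj : (u : ℕ → ℂ) (k₀+3) + u (k₀+1) + (a:ℂ) * u (k₀+2) = (lam:ℂ) * u (k₀+2) := by
      have h := hrec (k₀+2)
      rw [if_neg (by omega), hvC (k₀+2), if_pos rfl] at h
      simpa using h
    set S : ℕ → ℂ := fun n => m ^ n - (m⁻¹) ^ n with hS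
    have hS1 : S 1 = m - m⁻¹ := by simp [hS]
    have hμinvlt : μ⁻¹ < 1 := by
      rw [inv_lt_one_iff₀]; right; exact hμ1
    have hSne : S 1 ≠ 0 := by
      rw [hS1, hmdef]
      have : (μ : ℝ) - μ⁻¹ ≠ 0 := by
        have : μ⁻¹ < μ := lt_trans hμinvlt hμ1
        intro h; nlinarith
      intro h
      apply this
      exact_mod_cast (by push_cast at h ⊢; exact h : ((μ - μ⁻¹ : ℝ) : ℂ) = 0)
    have Sstep : ∀ n : ℕ, S (n+2) = (lam:ℂ) * S (n+1) - S n := by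
      intro n
      simp only [hS]
      rw [hlamc]
      simp only [inv_pow]
      field_simp
      ring
    set c : ℂ := u 0 / S 1 with hcdef
    have hc0 : (u : ℕ → ℂ) 0 = c * S 1 := by rw [hcdef]; field_simp
    have claim1 : ∀ n, n + 1 ≤ k₀ + 3 → (u : ℕ → ℂ) n = c * S (n+1) := by
      intro n
      induction n using Nat.strong_induction_on with
      | _ n ih =>
        match n with
        | 0 => intro _; exact hc0
        | 1 =>
          intro _
          have hS2 : S 2 = (lam:ℂ) * S 1 := by
            have h := Sstep 0
            have : S 0 = 0 := by simp [hS]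
            rw [this, sub_zero] at h; exact h
          rw [r0, hc0, hS2]; ring
        | (t+2) =>
          intro hle
          have h1 := ih (t+1) (by omega) (by omega)
          have h0 := ih t (by omega) (by omega)
          rw [rstep t (by omega), h1, h0, Sstep (t+1)]
          ring
    -- decay
    have hsum2 : Summable (fun n => ‖(u : ℕ → ℂ) n‖ ^ (2:ℕ)) := by
      have h := (lp.memℓp u).summable (by norm_num : 0 < (2:ℝ≥0∞).toReal)
      have h2 : (2:ℝ≥0∞).toReal = ((2:ℕ):ℝ) := by norm_num
      rw [h2] at h
      simpa [Real.rpow_natCast] using h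
    have htend0 : Filter.Tendsto (fun n => (u : ℕ → ℂ) n) Filter.atTop (nhds 0) := by
      rw [tendsto_zero_iff_norm_tendsto_zero]
      have h1 := hsum2.tendsto_atTop_zero
      have h2 := (Real.continuous_sqrt.tendsto 0).comp h1
      simpa [Real.sqrt_sq (norm_nonneg _), Function.comp_def] using h2
    set g : ℕ → ℂ := fun n => u (n+1) - m⁻¹ * u n with hgdef
    have hgstep : ∀ n, k₀ + 2 ≤ n → g (n+1) = m * g n := by
      intro n hn
      show (u : ℕ → ℂ) (n+1+1) - m⁻¹ * u (n+1) = m * ((u : ℕ → ℂ) (n+1) - m⁻¹ * u n)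
      have hr := rstep n (by omega)
      rw [show n+1+1 = n+2 from rfl, hr, hlamc]
      field_simp
      ring
    have hgpow : ∀ t, g (k₀+2+t) = m ^ t * g (k₀+2) := by
      intro t
      induction t with
      | zero => simp
      | succ t ih =>
        rw [show k₀+2+(t+1) = (k₀+2+t)+1 from by omega, hgstep _ (by omega), ih]
        ring
    have hgz : g (k₀+2) = 0 := by
      by_contra hne
      have hnm : ‖m‖ = μ := by rw [hmdef]; simpa using abs_of_pos hμ0
      have h1 : ∀ t, ‖g (k₀+2)‖ ≤ ‖g (k₀+2+t)‖ := by
        intro t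
        rw [hgpow t, norm_mul, norm_pow, hnm]
        have h2 : (1:ℝ) ≤ μ ^ t := one_le_pow₀ hμ1.le
        nlinarith [norm_nonneg (g (k₀+2))]
      have h2 : Filter.Tendsto (fun t => g (k₀+2+t)) Filter.atTop (nhds 0) := by
        have ha' : Filter.Tendsto (fun n => (u : ℕ → ℂ) (n+1)) Filter.atTop (nhds 0) :=
          htend0.comp (Filter.tendsto_add_atTop_nat 1)
        have hb : Filter.Tendsto g Filter.atTop (nhds 0) := by
          have := ha'.sub (htend0.const_mul (m⁻¹))
          simpa [hgdef] using this
        have := hb.comp (Filter.tendsto_add_atTop_nat (k₀+2))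
        simpa [Function.comp_def, Nat.add_comm] using this
      have h3 : Filter.Tendsto (fun t => ‖g (k₀+2+t)‖) Filter.atTop (nhds 0) := by
        simpa using h2.norm
      have h4 : ‖g (k₀+2)‖ ≤ 0 := ge_of_tendsto h3 (Filter.Eventually.of_forall h1)
      exact hne (norm_le_zero_iff.mp h4)
    have hu30 : (u : ℕ → ℂ) (k₀+3) = m⁻¹ * u (k₀+2) := by
      have h := hgz
      simp only [hgdef] at h
      linear_combination h
    have hck : c ≠ 0 := by
      intro hcz
      apply hu0
      have hz : ∀ n, (u : ℕ → ℂ) n = 0 := by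
        intro n
        induction n using Nat.strong_induction_on with
        | _ n ih =>
          by_cases h1 : n + 1 ≤ k₀ + 3
          · rw [claim1 n h1, hcz, zero_mul]
          · by_cases h2 : n = k₀ + 3
            · rw [h2, hu30, claim1 (k₀+2) (by omega), hcz]; ring
            · obtain ⟨t, rfl⟩ : ∃ t, n = t + 2 := ⟨n - 2, by omega⟩
              rw [rstep t (by omega), ih (t+1) (by omega), ih t (by omega)]; ring
      apply lp.ext
      funext n
      rw [lp.coeFn_zero]
      exact hz n
    have h1 : (u : ℕ → ℂ) (k₀+2) = c * S (k₀+3) := claim1 _ (by omega)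
    have h2 : (u : ℕ → ℂ) (k₀+1) = c * S (k₀+2) := claim1 _ (by omega)
    have h3 := rj
    rw [hu30, h1, h2] at h3
    have h5 : c * (m⁻¹ * S (k₀+3) + S (k₀+2) + (a:ℂ) * S (k₀+3) - (lam:ℂ) * S (k₀+3)) = 0 := by
      linear_combination h3
    have h4 : m⁻¹ * S (k₀+3) + S (k₀+2) + (a:ℂ) * S (k₀+3) - (lam:ℂ) * S (k₀+3) = 0 :=
      (mul_eq_zero.mp h5).resolve_left hck
    rw [hlamc] at h4
    simp only [hS] at h4
    linear_combination (-(m^(k₀+3))) * h4 + (m - (a:ℂ)) * hpow (k₀+3) + (-m) * hpow (k₀+2)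
  · intro hq
    set B : ℂ := m ^ (2*k₀+6) - 1 with hB
    set f : ℕ → ℂ := fun n => if n + 1 ≤ k₀ + 3 then m ^ (n+1) - (m⁻¹) ^ (n+1) else B * (m⁻¹) ^ (n+1) with hfdef
    have hμinv0 : (0:ℝ) < μ⁻¹ := by positivity
    have hμinvlt : μ⁻¹ < 1 := by rw [inv_lt_one_iff₀]; right; exact hμ1
    have hnminv : ‖m⁻¹‖ = μ⁻¹ := by
      rw [hmdef, ← Complex.ofReal_inv]
      simpa using abs_of_pos hμinv0
    have hmem : Memℓp f 2 := by
      apply memℓp_gen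
      have h2 : (2:ℝ≥0∞).toReal = ((2:ℕ):ℝ) := by norm_num
      rw [h2]
      simp only [Real.rpow_natCast]
      rw [← summable_nat_add_iff (k₀+3)]
      have hgeo : Summable (fun n : ℕ => (‖B‖^2 * (μ⁻¹)^(2*(k₀+4))) * ((μ⁻¹)^2)^n) :=
        (summable_geometric_of_lt_one (by positivity)
          (by nlinarith : (μ⁻¹)^2 < 1)).mul_left _
      apply hgeo.congr
      intro n
      rw [hfdef]
      simp only
      rw [if_neg (by omega)]
      rw [norm_mul, mul_pow, norm_pow, hnminv]
      rw [← pow_mul, ← pow_mul, mul_assoc, ← pow_add]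
      congr 2
      omega
    set u : H2 := ⟨f, hmem⟩ with hudef
    have hcoe : ∀ n, (u : ℕ → ℂ) n = f n := fun n => rfl
    refine ⟨u, ?_, ?_⟩
    · intro h
      have h0 : (u : ℕ → ℂ) 0 = 0 := by rw [h, lp.coeFn_zero]; rfl
      rw [hcoe 0, hfdef] at h0
      simp only [if_pos (by omega : 0 + 1 ≤ k₀ + 3)] at h0
      have : (μ : ℝ) - μ⁻¹ ≠ 0 := by
        have h5 : μ⁻¹ < μ := lt_trans hμinvlt hμ1
        intro hh; nlinarith
      apply this
      have : ((μ - μ⁻¹ : ℝ) : ℂ) = 0 := by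
        push_cast
        simpa [hmdef] using h0
      exact_mod_cast this
    · rw [eig_iff v H hH lam u]
      intro j
      simp only [hcoe]
      rcases Nat.eq_zero_or_pos j with rfl | hj
      · rw [if_pos rfl, hvC 0, if_neg (by omega), hfdef]
        simp only [if_pos (by omega : 0 + 1 ≤ k₀ + 3), if_pos (by omega : 1 + 1 ≤ k₀ + 3)]
        rw [hlamc]
        simp only [inv_pow]
        field_simp
        ring
      · obtain ⟨i, rfl⟩ : ∃ i, j = i + 1 := ⟨j - 1, by omega⟩
        rw [if_neg (by omega), hvC (i+1)]
        simp only [Nat.add_sub_cancel]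
        by_cases hc1 : i + 3 ≤ k₀ + 3
        · rw [if_neg (by omega), hfdef]
          simp only [if_pos (by omega : i + 1 + 1 + 1 ≤ k₀ + 3),
            if_pos (by omega : i + 1 + 1 ≤ k₀ + 3), if_pos (by omega : i + 1 ≤ k₀ + 3)]
          rw [hlamc]
          simp only [inv_pow]
          field_simp
          ring
        · by_cases hc2 : i = k₀ + 1
          · subst hc2
            rw [if_pos (by omega), hfdef]
            simp only [if_neg (by omega : ¬ (k₀ + 1 + 1 + 1 + 1 ≤ k₀ + 3)),
              if_pos (by omega : k₀ + 1 + 1 + 1 ≤ k₀ + 3), if_pos (by omega : k₀ + 1 + 1 ≤ k₀ + 3)]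
            rw [hlamc, hB]
            simp only [inv_pow]
            field_simp
            linear_combination (-(m^(2*k₀+7))) * hq
          · by_cases hc3 : i = k₀ + 2
            · subst hc3
              rw [if_neg (by omega), hfdef]
              simp only [if_neg (by omega : ¬ (k₀ + 2 + 1 + 1 + 1 ≤ k₀ + 3)),
                if_neg (by omega : ¬ (k₀ + 2 + 1 + 1 ≤ k₀ + 3)),
                if_pos (by omega : k₀ + 2 + 1 ≤ k₀ + 3)]
              rw [hlamc, hB]
              simp only [inv_pow]
              field_simp
              ring
            · obtain ⟨t, rfl⟩ : ∃ t, i = k₀ + 3 + t := ⟨i - (k₀+3), by omega⟩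
              rw [if_neg (by omega), hfdef]
              simp only [if_neg (by omega : ¬ (k₀ + 3 + t + 1 + 1 + 1 ≤ k₀ + 3)),
                if_neg (by omega : ¬ (k₀ + 3 + t + 1 + 1 ≤ k₀ + 3)),
                if_neg (by omega : ¬ (k₀ + 3 + t + 1 ≤ k₀ + 3))]
              rw [hlamc]
              simp only [inv_pow]
              field_simp
              ring
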